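/- Let E be a real Banach space and let (S(t))_{t≥0} be a strongly continuous semigroup of bounded linear operators on E such that S(t) is a compact operator for every t > 0 and there exist constants K ≥ 1 and δ > 0 with ‖S(t)‖ ≤ K e^{−δ t} for all t ≥ 0. Then for every C > 0 there exists a compact set L ⊆ E such that for every t ≥ 0 and every strongly measurable function h : [0,t] → E with ‖h(r)‖ ≤ C for all r ∈ [0,t], the Bochner integral ∫₀ᵗ S(r) h(r) dr belongs to L. -/

import Mathlib

open MeasureTheory Topology Filter Set

open Pointwise

noncomputable section

lemma joint_cont {E : Type*} [NormedAddCommGroup E] [NormedSpace ℝ E]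
    (S : ℝ → E →L[ℝ] E) (K : ℝ)
    (hScont : ∀ x : E, ContinuousOn (fun t => S t x) (Set.Ici 0))
    (hSb : ∀ t : ℝ, 0 ≤ t → ‖S t‖ ≤ K) :
    Continuous fun p : ℝ × E => S (max p.1 0) p.2 := by
  rw [continuous_iff_continuousAt]
  rintro ⟨r₀, x₀⟩
  have hc : Continuous fun r : ℝ => S (max r 0) x₀ := by
    have := (hScont x₀).comp_continuous (continuous_id.max continuous_const)
      (fun r => le_max_right r 0)
    exact this
  rw [ContinuousAt, tendsto_iff_norm_sub_tendsto_zero]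
  have hb : ∀ p : ℝ × E, ‖S (max p.1 0) p.2 - S (max r₀ 0) x₀‖ ≤
      K * ‖p.2 - x₀‖ + ‖S (max p.1 0) x₀ - S (max r₀ 0) x₀‖ := by
    intro p
    have : S (max p.1 0) p.2 - S (max r₀ 0) x₀ =
        S (max p.1 0) (p.2 - x₀) + (S (max p.1 0) x₀ - S (max r₀ 0) x₀) := by
      rw [map_sub]; abel
    rw [this]
    refine (norm_add_le _ _).trans (add_le_add ?_ le_rfl)
    exact ((S (max p.1 0)).le_opNorm _).trans
      (mul_le_mul_of_nonneg_right (hSb _ (le_max_right _ _)) (norm_nonneg _))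
  have h1 : Tendsto (fun p : ℝ × E => K * ‖p.2 - x₀‖ + ‖S (max p.1 0) x₀ - S (max r₀ 0) x₀‖)
      (𝓝 (r₀, x₀)) (𝓝 0) := by
    have t1 : Tendsto (fun p : ℝ × E => K * ‖p.2 - x₀‖) (𝓝 (r₀, x₀)) (𝓝 (K * ‖x₀ - x₀‖)) :=
      tendsto_const_nhds.mul ((continuous_snd.sub continuous_const).norm.tendsto _)
    have t2 : Tendsto (fun p : ℝ × E => ‖S (max p.1 0) x₀ - S (max r₀ 0) x₀‖) (𝓝 (r₀, x₀))
        (𝓝 ‖S (max r₀ 0) x₀ - S (max r₀ 0) x₀‖) :=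
      ((hc.comp continuous_fst).sub continuous_const).norm.tendsto _
    simpa using t1.add t2
  exact squeeze_zero (fun p => norm_nonneg _) hb h1


set_option maxHeartbeats 2000000 in
/-- Let `(S(t))_{t≥0}` be a strongly continuous semigroup on a real Banach
space `E` which is immediately compact and uniformly exponentially stable
(`‖S(t)‖ ≤ K e^{−δt}`). Then for every `C > 0` there is a single compact set `L ⊆ E`
containing all integrals `∫₀ᵗ S(r) h(r) dr`, `t ≥ 0`, over strongly measurable functions
`h` bounded by `C` on `[0,t]`. -/
theorem statement17 {E : Type*} [NormedAddCommGroup E] [NormedSpace ℝ E] [CompleteSpace E]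
    (S : ℝ → E →L[ℝ] E)
    (hS0 : S 0 = 1)
    (hSadd : ∀ s t : ℝ, 0 ≤ s → 0 ≤ t → S (s + t) = (S s).comp (S t))
    (hScont : ∀ x : E, ContinuousOn (fun t => S t x) (Set.Ici 0))
    (hcpt : ∀ t : ℝ, 0 < t → IsCompactOperator (S t))
    (K δ : ℝ) (hK : 1 ≤ K) (hδ : 0 < δ)
    (hbound : ∀ t : ℝ, 0 ≤ t → ‖S t‖ ≤ K * Real.exp (-δ * t)) :
    ∀ C > (0:ℝ), ∃ L : Set E, IsCompact L ∧
      ∀ t : ℝ, 0 ≤ t → ∀ h : ℝ → E, StronglyMeasurable h →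
        (∀ r ∈ Set.Icc (0:ℝ) t, ‖h r‖ ≤ C) →
        (∫ r in (0:ℝ)..t, S r (h r)) ∈ L := by
  intro C hC
  have hKpos : (0:ℝ) < K := lt_of_lt_of_le one_pos hK
  have hSb : ∀ t : ℝ, 0 ≤ t → ‖S t‖ ≤ K := by
    intro t ht
    refine (hbound t ht).trans ?_
    have h1 : Real.exp (-δ * t) ≤ 1 := Real.exp_le_one_iff.mpr (by nlinarith)
    nlinarith
  have hjoint := joint_cont S K hScont hSb
  set M := K * C / δ with hMdef
  have hM : 0 < M := by positivity
  set A : Set E := {x | ∃ t : ℝ, 0 ≤ t ∧ ∃ h : ℝ → E, StronglyMeasurable h ∧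
      (∀ r ∈ Set.Icc (0:ℝ) t, ‖h r‖ ≤ C) ∧ x = ∫ r in (0:ℝ)..t, S r (h r)} with hAdef
  refine ⟨closure A, ?_, fun t ht h hmeas hbd => subset_closure ⟨t, ht, h, hmeas, hbd, rfl⟩⟩
  refine TotallyBounded.isCompact_of_isClosed (TotallyBounded.closure ?_) isClosed_closure
  rw [Metric.totallyBounded_iff]
  intro ε hε
  obtain ⟨s, hs, hsmall⟩ : ∃ s : ℝ, 0 < s ∧ s * (K * C) ≤ ε / 3 :=
    ⟨(ε/3)/(K*C), by positivity, le_of_eq (div_mul_cancel₀ _ (by positivity))⟩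
  -- key decomposition
  have key : ∀ x ∈ A, ∃ y : E, ‖y‖ ≤ M ∧ ‖x - S s y‖ ≤ ε / 3 := by
    rintro x ⟨t, ht, h, hmeas, hbd, rfl⟩
    set g : ℝ → E := fun r => S (max r 0) (h r) with hgdef
    have meas_g : StronglyMeasurable g :=
      hjoint.comp_stronglyMeasurable (stronglyMeasurable_id.prodMk hmeas)
    have gbd : ∀ r ∈ Set.Icc (0:ℝ) t, ‖g r‖ ≤ K * C := by
      intro r hr
      have : max r 0 = r := max_eq_left hr.1
      rw [hgdef]; dsimp only; rw [this]
      exact ((S r).le_opNorm _).trans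
        (mul_le_mul (hSb r hr.1) (hbd r hr) (norm_nonneg _) hKpos.le)
    have hint : ∀ a b : ℝ, 0 ≤ a → a ≤ b → b ≤ t → IntervalIntegrable g volume a b := by
      intro a b ha hab hbt
      rw [intervalIntegrable_iff_integrableOn_Ioc_of_le hab]
      refine Integrable.mono' (g := fun _ => K * C)
        (integrableOn_const measure_Ioc_lt_top.ne)
        meas_g.aestronglyMeasurable ?_
      filter_upwards [ae_restrict_mem measurableSet_Ioc] with r hr
      exact gbd r ⟨ha.trans hr.1.le, hr.2.trans hbt⟩
    have hxg : (∫ r in (0:ℝ)..t, S r (h r)) = ∫ r in (0:ℝ)..t, g r := by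
      refine intervalIntegral.integral_congr ?_
      intro r hr
      rw [Set.uIcc_of_le ht] at hr
      rw [hgdef]; dsimp only; rw [max_eq_left hr.1]
    rcases le_or_gt t s with hts | hst
    · refine ⟨0, by simpa using hM.le, ?_⟩
      rw [map_zero, sub_zero, hxg]
      have hn : ‖∫ r in (0:ℝ)..t, g r‖ ≤ K * C * |t - 0| := by
        apply intervalIntegral.norm_integral_le_of_norm_le_const
        intro r hr
        rw [Set.uIoc_of_le ht] at hr
        exact gbd r ⟨hr.1.le, hr.2⟩
      refine hn.trans ?_
      rw [abs_of_nonneg (by simpa using ht)]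
      calc K * C * (t - 0) ≤ s * (K * C) := by nlinarith [mul_pos hKpos hC]
      _ ≤ ε / 3 := hsmall
    · -- main case: split at s
      set g2 : ℝ → E := fun r => S (max (r - s) 0) (h r) with hg2def
      have meas_g2 : StronglyMeasurable g2 :=
        hjoint.comp_stronglyMeasurable
          ((stronglyMeasurable_id.sub stronglyMeasurable_const).prodMk hmeas)
      have g2bd : ∀ r ∈ Set.Icc s t, ‖g2 r‖ ≤ K * C * Real.exp (-δ * (r - s)) := by
        intro r hr
        have hr0 : (0:ℝ) ≤ r - s := by linarith [hr.1]
        rw [hg2def]; dsimp only; rw [max_eq_left hr0]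
        have h1 : ‖S (r - s) (h r)‖ ≤ ‖S (r - s)‖ * ‖h r‖ := (S (r - s)).le_opNorm _
        have h2 : ‖S (r - s)‖ ≤ K * Real.exp (-δ * (r - s)) := hbound _ hr0
        have h3 : ‖h r‖ ≤ C := hbd r ⟨le_trans hs.le hr.1, hr.2⟩
        have := Real.exp_pos (-δ * (r - s))
        nlinarith [norm_nonneg (S (r - s)), norm_nonneg (h r)]
      have hint2 : IntervalIntegrable g2 volume s t := by
        rw [intervalIntegrable_iff_integrableOn_Ioc_of_le hst.le]
        refine Integrable.mono' (g := fun _ => K * C)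
          (integrableOn_const measure_Ioc_lt_top.ne)
          meas_g2.aestronglyMeasurable ?_
        filter_upwards [ae_restrict_mem measurableSet_Ioc] with r hr
        refine (g2bd r ⟨hr.1.le, hr.2⟩).trans ?_
        have h1 : Real.exp (-δ * (r - s)) ≤ 1 :=
          Real.exp_le_one_iff.mpr (by nlinarith [hr.1.le])
        nlinarith [mul_pos hKpos hC, Real.exp_pos (-δ * (r - s))]
      refine ⟨∫ r in s..t, g2 r, ?_, ?_⟩
      · -- norm bound on y
        have hb1 : ‖∫ r in s..t, g2 r‖ ≤ |∫ r in s..t, K * C * Real.exp (-δ * (r - s))| := by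
          refine intervalIntegral.norm_integral_le_abs_of_norm_le ?_ ?_
          · filter_upwards [ae_restrict_mem measurableSet_uIoc] with r hr
            rw [Set.uIoc_of_le hst.le] at hr
            exact g2bd r ⟨hr.1.le, hr.2⟩
          · exact (Continuous.intervalIntegrable (by fun_prop) s t)
        refine hb1.trans ?_
        have hcomp : (∫ r in s..t, Real.exp (-δ * (r - s)))
            = (-δ)⁻¹ * (Real.exp (-δ * (t - s)) - 1) := by
          rw [intervalIntegral.integral_comp_sub_right (fun u => Real.exp (-δ * u)) s]
          simp only [sub_self]
          rw [intervalIntegral.integral_comp_mul_left Real.exp (neg_ne_zero.mpr hδ.ne')]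
          rw [mul_zero, integral_exp, smul_eq_mul, Real.exp_zero]
        have heq3 : (∫ r in s..t, K * C * Real.exp (-δ * (r - s)))
            = K * C * ((-δ)⁻¹ * (Real.exp (-δ * (t - s)) - 1)) := by
          rw [intervalIntegral.integral_const_mul, hcomp]
        rw [heq3]
        set u := Real.exp (-δ * (t - s)) with hu
        have hu0 : 0 < u := Real.exp_pos _
        have hu1 : u ≤ 1 := Real.exp_le_one_iff.mpr (by nlinarith [hst.le])
        have heq4 : K * C * ((-δ)⁻¹ * (u - 1)) = K * C * (1 - u) / δ := by
          rw [inv_neg, div_eq_mul_inv]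
          ring
        rw [heq4, abs_of_nonneg (div_nonneg (mul_nonneg (by positivity) (by linarith)) hδ.le),
          hMdef]
        have hnum : K * C * (1 - u) ≤ K * C := by nlinarith [mul_pos hKpos hC]
        exact div_le_div_of_nonneg_right hnum hδ.le
      · -- residual bound
        have hsplit : (∫ r in (0:ℝ)..t, g r)
            = (∫ r in (0:ℝ)..s, g r) + ∫ r in s..t, g r :=
          (intervalIntegral.integral_add_adjacent_intervals
            (hint 0 s le_rfl hs.le (by linarith)) (hint s t hs.le hst.le le_rfl)).symm
        have heq2 : (∫ r in s..t, g r) = S s (∫ r in s..t, g2 r) := by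
          rw [← ContinuousLinearMap.intervalIntegral_comp_comm _ hint2]
          refine intervalIntegral.integral_congr ?_
          intro r hr
          rw [Set.uIcc_of_le hst.le] at hr
          have hr0 : (0:ℝ) ≤ r := le_trans hs.le hr.1
          have hrs : (0:ℝ) ≤ r - s := by linarith [hr.1]
          show S (max r 0) (h r) = S s (S (max (r - s) 0) (h r))
          rw [max_eq_left hr0, max_eq_left hrs]
          have h4 : S r = (S s).comp (S (r - s)) := by
            have h5 := hSadd s (r - s) hs.le hrs
            rwa [show s + (r - s) = r by ring] at h5
          rw [h4]
          rfl
        rw [hxg, hsplit, heq2, add_sub_cancel_right]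
        have hn : ‖∫ r in (0:ℝ)..s, g r‖ ≤ K * C * |s - 0| := by
          apply intervalIntegral.norm_integral_le_of_norm_le_const
          intro r hr
          rw [Set.uIoc_of_le hs.le] at hr
          exact gbd r ⟨hr.1.le, hr.2.trans hst.le⟩
        refine hn.trans ?_
        rw [abs_of_nonneg (by simpa using hs.le)]
        calc K * C * (s - 0) ≤ s * (K * C) := by nlinarith
        _ ≤ ε / 3 := hsmall
  -- conclude via finite net for the compact image
  have hcptS : IsCompact (closure ((S s) '' Metric.closedBall 0 M)) := by
    obtain ⟨Kc, hKc, hKV⟩ := hcpt s hs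
    obtain ⟨r, hr, hball⟩ := Metric.mem_nhds_iff.mp hKV
    set c : ℝ := M / r + 1 with hcdef
    have hcpos : 0 < c := by positivity
    have hcne : c ≠ 0 := hcpos.ne'
    have himg : (S s) '' Metric.closedBall 0 M ⊆ c • Kc := by
      rintro _ ⟨y, hy, rfl⟩
      have h1 : c⁻¹ • y ∈ Metric.ball 0 r := by
        rw [Metric.mem_closedBall, dist_zero_right] at hy
        rw [Metric.mem_ball, dist_zero_right, norm_smul, norm_inv, Real.norm_of_nonneg hcpos.le]
        have hcr : M < c * r := by
          rw [hcdef]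
          field_simp
          nlinarith
        have : c⁻¹ * ‖y‖ ≤ c⁻¹ * M := by
          exact mul_le_mul_of_nonneg_left hy (by positivity)
        refine lt_of_le_of_lt this ?_
        rw [inv_mul_lt_iff₀ hcpos]
        linarith
      have h2 : S s (c⁻¹ • y) ∈ Kc := hball h1
      refine Set.mem_smul_set.mpr ⟨S s (c⁻¹ • y), h2, ?_⟩
      rw [← _root_.map_smul, smul_inv_smul₀ hcne]
    exact (hKc.smul c).closure_of_subset himg
  obtain ⟨F, hFfin, hFcov⟩ := Metric.totallyBounded_iff.mp hcptS.totallyBounded (ε/3)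
    (by positivity)
  refine ⟨F, hFfin, fun x hx => ?_⟩
  obtain ⟨y, hy, hxy⟩ := key x hx
  have hmem : S s y ∈ closure ((S s) '' Metric.closedBall 0 M) :=
    subset_closure ⟨y, by simpa using hy, rfl⟩
  obtain ⟨z, hzF, hz⟩ := Set.mem_iUnion₂.mp (hFcov hmem)
  refine Set.mem_iUnion₂.mpr ⟨z, hzF, ?_⟩
  rw [Metric.mem_ball] at hz ⊢
  calc dist x z ≤ dist x (S s y) + dist (S s y) z := dist_triangle _ _ _
    _ < ε/3 + ε/3 := by
        rw [dist_eq_norm]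
        exact add_lt_add_of_le_of_lt hxy hz
    _ < ε := by linarith
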